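/- Let H = (V,E) be a k-uniform hypergraph, v ∈ V a vertex with degree d, and suppose the number of ordered pairs of distinct edges through v sharing at least 2 vertices is at most η·d². Let 0 < ε < 1 and let D be the number of edges e ∋ v entirely contained in the ε-percolation V_ε of V (including v itself being sampled). Then E[D²] ≤ (ε^{2k-1} + ε^{k+1} η) d² + ε^k d. -/

import Mathlib

open MeasureTheory

lemma pi_allTrue {V : Type*} [Fintype V] [DecidableEq V] (μ : Measure Bool)
    [IsProbabilityMeasure μ] (s : Finset V) :
    Measure.pi (fun _ : V => μ) {ω | ∀ u ∈ s, ω u = true} = μ {true} ^ s.card := by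
  have h1 : {ω : V → Bool | ∀ u ∈ s, ω u = true}
      = Set.pi Set.univ (fun u => if u ∈ s then {true} else Set.univ) := by
    ext ω
    simp only [Set.mem_setOf_eq, Set.mem_pi, Set.mem_univ, forall_true_left]
    constructor
    · intro h u; split <;> simp_all
    · intro h u hu; have := h u; simp [hu] at this; exact this
  rw [h1, Measure.pi_pi]
  have h2 : ∀ u : V, μ (if u ∈ s then ({true} : Set Bool) else Set.univ)
      = if u ∈ s then μ {true} else 1 := by
    intro u
    by_cases h : u ∈ s
    · rw [if_pos h, if_pos h]
    · rw [if_neg h, if_neg h, measure_univ]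
  simp_rw [h2]
  rw [Finset.prod_ite_mem, Finset.univ_inter, Finset.prod_const]

lemma measurable_allTrue {V : Type*} [Fintype V] [DecidableEq V] (s : Finset V) :
    MeasurableSet {ω : V → Bool | ∀ u ∈ s, ω u = true} := by
  have : {ω : V → Bool | ∀ u ∈ s, ω u = true}
      = ⋂ u ∈ s, (fun ω : V → Bool => ω u) ⁻¹' {true} := by
    ext ω; simp
  rw [this]
  exact MeasurableSet.biInter s.countable_toSet
    (fun u _ => (measurable_pi_apply u) (measurableSet_singleton true))

/-- With `D` the number of edges through `v` entirely contained in the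
`ε`-percolation of `V` (including `v` itself being sampled), and the overlapping-pairs
hypothesis, `E[D²] ≤ (ε^(2k-1) + ε^(k+1) η) d² + ε^k d`. -/
theorem second_moment_degree_after_percolation {V : Type*} [Fintype V] [DecidableEq V]
    (k : ℕ) (E : Finset (Finset V)) (hE : ∀ e ∈ E, e.card = k)
    (v : V) (d : ℕ) (hd : d = (E.filter (fun e => v ∈ e)).card)
    (η : ℝ) (hη : 0 ≤ η)
    (hpairs : ((((E ×ˢ E).filter (fun q =>
        q.1 ≠ q.2 ∧ v ∈ q.1 ∧ v ∈ q.2 ∧ 2 ≤ (q.1 ∩ q.2).card)).card : ℝ) ≤ η * d ^ 2))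
    (ε : NNReal) (hε0 : 0 < ε) (hε1 : ε < 1) :
    ∫ ω : V → Bool,
        (((E.filter (fun e => v ∈ e ∧ ∀ u ∈ e, ω u = true)).card : ℝ)) ^ 2
        ∂(Measure.pi fun _ : V => (PMF.bernoulli ε (by exact_mod_cast hε1.le)).toMeasure)
      ≤ ((ε : ℝ) ^ (2 * k - 1) + (ε : ℝ) ^ (k + 1) * η) * d ^ 2 + (ε : ℝ) ^ k * d := by
  have hεle : (ε : ENNReal) ≤ 1 := by exact_mod_cast hε1.le
  set μb := (PMF.bernoulli ε hε1.le).toMeasure with hμb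
  set π := Measure.pi fun _ : V => μb with hπ
  have hb : μb {true} = (ε : ENNReal) := by
    rw [hμb, PMF.toMeasure_apply_singleton _ _ (measurableSet_singleton _)]
    simp [PMF.bernoulli_apply]
  set S := E.filter (fun e => v ∈ e) with hS
  have hdS : d = S.card := hd
  -- each indicator integral
  have hint : ∀ s : Finset V,
      ∫ ω : V → Bool, (if ∀ u ∈ s, ω u = true then (1:ℝ) else 0) ∂π = (ε:ℝ) ^ s.card := by
    intro s
    have heq : (fun ω : V → Bool => if ∀ u ∈ s, ω u = true then (1:ℝ) else 0)
        = Set.indicator {ω : V → Bool | ∀ u ∈ s, ω u = true} (fun _ => (1:ℝ)) := by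
      funext ω
      by_cases h : ∀ u ∈ s, ω u = true <;> simp [h, Set.indicator_apply]
    rw [heq, integral_indicator_const _ (measurable_allTrue s)]
    rw [measureReal_def, hπ, pi_allTrue, hb]
    simp [ENNReal.toReal_pow]
  have hInt : ∀ s : Finset V,
      Integrable (fun ω : V → Bool => if ∀ u ∈ s, ω u = true then (1:ℝ) else 0) π := by
    intro s
    have heq : (fun ω : V → Bool => if ∀ u ∈ s, ω u = true then (1:ℝ) else 0)
        = Set.indicator {ω : V → Bool | ∀ u ∈ s, ω u = true} (fun _ => (1:ℝ)) := by
      funext ω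
      by_cases h : ∀ u ∈ s, ω u = true <;> simp [h, Set.indicator_apply]
    rw [heq]
    exact (integrable_const 1).indicator (measurable_allTrue s)
  -- pointwise expansion
  have hmul : ∀ (e f : Finset V) (ω : V → Bool),
      (if ∀ u ∈ e, ω u = true then (1:ℝ) else 0) * (if ∀ u ∈ f, ω u = true then (1:ℝ) else 0)
        = if ∀ u ∈ e ∪ f, ω u = true then (1:ℝ) else 0 := by
    intro e f ω
    have h : (∀ u ∈ e ∪ f, ω u = true) ↔ (∀ u ∈ e, ω u = true) ∧ (∀ u ∈ f, ω u = true) :=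
      Finset.forall_mem_union
    by_cases h1 : ∀ u ∈ e, ω u = true <;> by_cases h2 : ∀ u ∈ f, ω u = true
    · rw [if_pos h1, if_pos h2, if_pos (h.2 ⟨h1, h2⟩), one_mul]
    · rw [if_pos h1, if_neg h2, if_neg (fun hh => h2 (h.1 hh).2), one_mul]
    · rw [if_neg h1, if_neg (fun hh => h1 (h.1 hh).1), zero_mul]
    · rw [if_neg h1, if_neg (fun hh => h1 (h.1 hh).1), zero_mul]
  have hpt : ∀ ω : V → Bool,
      (((E.filter (fun e => v ∈ e ∧ ∀ u ∈ e, ω u = true)).card : ℝ)) ^ 2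
        = ∑ p ∈ S ×ˢ S, (if ∀ u ∈ p.1 ∪ p.2, ω u = true then (1:ℝ) else 0) := by
    intro ω
    have hcard : ((E.filter (fun e => v ∈ e ∧ ∀ u ∈ e, ω u = true)).card : ℝ)
        = ∑ e ∈ S, (if ∀ u ∈ e, ω u = true then (1:ℝ) else 0) := by
      rw [Finset.sum_boole, hS, Finset.filter_filter]
    rw [hcard, sq, Finset.sum_mul_sum, ← Finset.sum_product']
    exact Finset.sum_congr rfl fun p _ => hmul p.1 p.2 ω
  have key : ∫ ω : V → Bool,
      (((E.filter (fun e => v ∈ e ∧ ∀ u ∈ e, ω u = true)).card : ℝ)) ^ 2 ∂π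
        = ∑ p ∈ S ×ˢ S, (ε:ℝ) ^ ((p.1 ∪ p.2).card) := by
    calc ∫ ω : V → Bool,
        (((E.filter (fun e => v ∈ e ∧ ∀ u ∈ e, ω u = true)).card : ℝ)) ^ 2 ∂π
        = ∫ ω : V → Bool,
            ∑ p ∈ S ×ˢ S, (if ∀ u ∈ p.1 ∪ p.2, ω u = true then (1:ℝ) else 0) ∂π := by
          exact integral_congr_ae (Filter.Eventually.of_forall hpt)
      _ = ∑ p ∈ S ×ˢ S, ∫ ω : V → Bool,
            (if ∀ u ∈ p.1 ∪ p.2, ω u = true then (1:ℝ) else 0) ∂π :=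
          integral_finset_sum _ (fun p _ => hInt _)
      _ = ∑ p ∈ S ×ˢ S, (ε:ℝ) ^ ((p.1 ∪ p.2).card) :=
          Finset.sum_congr rfl fun p _ => hint _
  rw [key]
  -- facts about S
  have hSE : ∀ e ∈ S, e ∈ E ∧ v ∈ e := by
    intro e he; rw [hS, Finset.mem_filter] at he; exact he
  have hεpos : (0:ℝ) < (ε:ℝ) := by exact_mod_cast hε0
  have hεle1 : (ε:ℝ) ≤ 1 := by exact_mod_cast hε1.le
  -- split the sum
  set T := S ×ˢ S with hT
  set T1 := T.filter (fun p => p.1 = p.2) with hT1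
  set T2 := (T.filter (fun p => ¬ p.1 = p.2)).filter (fun p => 2 ≤ (p.1 ∩ p.2).card) with hT2
  set T3 := (T.filter (fun p => ¬ p.1 = p.2)).filter (fun p => ¬ 2 ≤ (p.1 ∩ p.2).card) with hT3
  have hsplit : ∑ p ∈ T, (ε:ℝ) ^ ((p.1 ∪ p.2).card)
      = ∑ p ∈ T1, (ε:ℝ) ^ ((p.1 ∪ p.2).card)
        + (∑ p ∈ T2, (ε:ℝ) ^ ((p.1 ∪ p.2).card) + ∑ p ∈ T3, (ε:ℝ) ^ ((p.1 ∪ p.2).card)) := by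
    rw [hT1, hT2, hT3, Finset.sum_filter_add_sum_filter_not, Finset.sum_filter_add_sum_filter_not]
  rw [hsplit]
  -- bound on T1
  have hT1card : T1.card ≤ d := by
    rw [hdS]
    apply Finset.card_le_card_of_injOn Prod.fst
    · intro p hp
      rw [hT1, Finset.mem_coe, Finset.mem_filter, hT, Finset.mem_product] at hp
      exact hp.1.1
    · intro p hp q hq hpq
      rw [Finset.mem_coe, hT1, Finset.mem_filter] at hp hq
      exact Prod.ext hpq (by rw [← hp.2, ← hq.2, hpq])
  have hB1 : ∑ p ∈ T1, (ε:ℝ) ^ ((p.1 ∪ p.2).card) ≤ (ε:ℝ) ^ k * d := by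
    calc ∑ p ∈ T1, (ε:ℝ) ^ ((p.1 ∪ p.2).card) ≤ T1.card • ((ε:ℝ) ^ k) := by
          apply Finset.sum_le_card_nsmul
          intro p hp
          rw [hT1, Finset.mem_filter, hT, Finset.mem_product] at hp
          have : p.1 ∪ p.2 = p.1 := by rw [← hp.2]; exact Finset.union_self _
          rw [this, hE p.1 (hSE p.1 hp.1.1).1]
      _ = (T1.card : ℝ) * (ε:ℝ) ^ k := by rw [nsmul_eq_mul]
      _ ≤ (d:ℝ) * (ε:ℝ) ^ k := by
          apply mul_le_mul_of_nonneg_right _ (le_of_lt (pow_pos hεpos k))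
          exact_mod_cast hT1card
      _ = (ε:ℝ) ^ k * d := mul_comm _ _
  -- union card facts for off-diagonal pairs
  have hunion : ∀ p : Finset V × Finset V, p ∈ T → ¬ p.1 = p.2 →
      (p.1 ∪ p.2).card + (p.1 ∩ p.2).card = 2 * k ∧ (p.1 ∩ p.2).card < k ∧
        1 ≤ (p.1 ∩ p.2).card := by
    intro p hp hne
    rw [hT, Finset.mem_product] at hp
    obtain ⟨h1E, h1v⟩ := hSE p.1 hp.1
    obtain ⟨h2E, h2v⟩ := hSE p.2 hp.2
    have hc1 := hE p.1 h1E
    have hc2 := hE p.2 h2E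
    refine ⟨?_, ?_, ?_⟩
    · rw [Finset.card_union_add_card_inter, hc1, hc2]; ring
    · have hss : p.1 ∩ p.2 ⊂ p.1 := by
        refine Finset.ssubset_iff_subset_ne.2 ⟨Finset.inter_subset_left, ?_⟩
        intro h
        have hsub : p.1 ⊆ p.2 := Finset.inter_eq_left.1 h
        exact hne (Finset.eq_of_subset_of_card_le hsub (le_of_eq (hc2.trans hc1.symm)))
      calc (p.1 ∩ p.2).card < p.1.card := Finset.card_lt_card hss
        _ = k := hc1
    · exact Finset.card_pos.2 ⟨v, Finset.mem_inter.2 ⟨h1v, h2v⟩⟩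
  -- bound on T2
  have hT2eq : T2 = (E ×ˢ E).filter (fun q =>
      q.1 ≠ q.2 ∧ v ∈ q.1 ∧ v ∈ q.2 ∧ 2 ≤ (q.1 ∩ q.2).card) := by
    ext p
    simp only [hT2, hT, hS, Finset.mem_filter, Finset.mem_product, ne_eq]
    tauto
  have hB2 : ∑ p ∈ T2, (ε:ℝ) ^ ((p.1 ∪ p.2).card) ≤ (ε:ℝ) ^ (k + 1) * (η * d ^ 2) := by
    calc ∑ p ∈ T2, (ε:ℝ) ^ ((p.1 ∪ p.2).card) ≤ T2.card • ((ε:ℝ) ^ (k + 1)) := by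
          apply Finset.sum_le_card_nsmul
          intro p hp
          rw [hT2, Finset.mem_filter] at hp
          obtain ⟨hpT, hne⟩ := Finset.mem_filter.1 hp.1
          obtain ⟨hsum, hlt, _⟩ := hunion p hpT hne
          apply pow_le_pow_of_le_one hεpos.le hεle1
          omega
      _ = (T2.card : ℝ) * (ε:ℝ) ^ (k + 1) := by rw [nsmul_eq_mul]
      _ ≤ (η * d ^ 2) * (ε:ℝ) ^ (k + 1) := by
          apply mul_le_mul_of_nonneg_right _ (le_of_lt (pow_pos hεpos _))
          rw [hT2eq]; exact_mod_cast hpairs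
      _ = (ε:ℝ) ^ (k + 1) * (η * d ^ 2) := mul_comm _ _
  -- bound on T3
  have hT3card : T3.card ≤ d ^ 2 := by
    calc T3.card ≤ ((T.filter (fun p => ¬ p.1 = p.2))).card :=
          Finset.card_filter_le _ _
      _ ≤ T.card := Finset.card_filter_le _ _
      _ = d ^ 2 := by rw [hT, Finset.card_product, ← hdS, sq]
  have hB3 : ∑ p ∈ T3, (ε:ℝ) ^ ((p.1 ∪ p.2).card) ≤ (ε:ℝ) ^ (2 * k - 1) * d ^ 2 := by
    calc ∑ p ∈ T3, (ε:ℝ) ^ ((p.1 ∪ p.2).card) ≤ T3.card • ((ε:ℝ) ^ (2 * k - 1)) := by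
          apply Finset.sum_le_card_nsmul
          intro p hp
          rw [hT3, Finset.mem_filter] at hp
          obtain ⟨hpT, hne⟩ := Finset.mem_filter.1 hp.1
          obtain ⟨hsum, _, hge1⟩ := hunion p hpT hne
          apply pow_le_pow_of_le_one hεpos.le hεle1
          have := hp.2
          omega
      _ = (T3.card : ℝ) * (ε:ℝ) ^ (2 * k - 1) := by rw [nsmul_eq_mul]
      _ ≤ ((d:ℝ) ^ 2) * (ε:ℝ) ^ (2 * k - 1) := by
          apply mul_le_mul_of_nonneg_right _ (le_of_lt (pow_pos hεpos _))
          exact_mod_cast hT3card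
      _ = (ε:ℝ) ^ (2 * k - 1) * d ^ 2 := mul_comm _ _
  nlinarith [hB1, hB2, hB3]
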